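/- arXiv:1601.01496 — 4 statements merged into one kernel-verified Lean document; each statement's English description precedes it below -/
import Mathlib

section
/- If θ is a real number such that both cos θ and sin θ are rational, and tan θ = q/p with p, q coprime integers, then p² + q² is a perfect square. -/
theorem sq_int_of_rat (r : ℚ) (n : ℤ) (h : r ^ 2 = (n : ℚ)) : ∃ k : ℤ, (n : ℚ) = (k : ℚ) ^ 2 := by
  have hden : (r ^ 2).den = r.den ^ 2 := Rat.den_pow r 2
  have h1 : (r ^ 2).den = 1 := by rw [h]; simp
  have : r.den = 1 := by
    have := h1 ▸ hden
    nlinarith [r.pos]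
  rw [Rat.den_eq_one_iff] at this
  exact ⟨r.num, by rw [← h, this]⟩

theorem stmt_0 (θ : ℝ) (hcos0 : Real.cos θ ≠ 0)
    (hcosQ : ∃ a : ℚ, Real.cos θ = a) (hsinQ : ∃ b : ℚ, Real.sin θ = b)
    (p q : ℤ) (hpq : Int.gcd p q = 1) (htan : Real.tan θ = (q : ℝ) / (p : ℝ)) :
    ∃ k : ℤ, p ^ 2 + q ^ 2 = k ^ 2 := by
  obtain ⟨a, ha⟩ := hcosQ
  obtain ⟨b, hb⟩ := hsinQ
  have ha0 : a ≠ 0 := by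
    intro h; apply hcos0; rw [ha, h]; simp
  have hpyth : a ^ 2 + b ^ 2 = 1 := by
    have := Real.sin_sq_add_cos_sq θ
    rw [ha, hb] at this
    have : ((b ^ 2 + a ^ 2 : ℚ) : ℝ) = ((1 : ℚ) : ℝ) := by push_cast; linarith
    exact_mod_cast by linarith [Rat.cast_injective this]
  have htan' : (b : ℝ) / (a : ℝ) = (q : ℝ) / (p : ℝ) := by
    rw [← hb, ← ha, ← Real.tan_eq_sin_div_cos, htan]
  rcases eq_or_ne p 0 with hp | hp
  · subst hp
    have hq : q.natAbs = 1 := by simpa using hpq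
    have : q ^ 2 = 1 := by
      have := Int.natAbs_eq q
      rcases this with h | h <;> rw [h] <;> simp [hq]
    exact ⟨1, by simp [this]⟩
  · have hpR : (p : ℝ) ≠ 0 := by exact_mod_cast hp
    have haR : (a : ℝ) ≠ 0 := by exact_mod_cast ha0
    have hbp : (b : ℝ) * p = (a : ℝ) * q := by
      field_simp at htan'; linarith
    have hbpQ : b * p = a * q := by exact_mod_cast hbp
    -- (p/a)^2 = p^2 + q^2
    have key : ((p : ℚ) / a) ^ 2 = ((p ^ 2 + q ^ 2 : ℤ) : ℚ) := by
      have hpQ : (p : ℚ) ≠ 0 := by exact_mod_cast hp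
      field_simp
      push_cast
      linear_combination (-(p:ℚ)^2) * hpyth + (b*(p:ℚ) + a*(q:ℚ)) * hbpQ
    obtain ⟨k, hk⟩ := sq_int_of_rat _ _ key
    exact ⟨k, by exact_mod_cast hk⟩
end

section
/- The set of angles θ with both cos θ and sin θ rational is dense in ℝ. -/
open Real Set

/-- Tangent half-angle: `2 * arctan q` has rational cosine and sine for rational `q`. -/
lemma mem_ratCircle (q : ℚ) :
    (2 * Real.arctan q) ∈ {θ : ℝ | (∃ a : ℚ, Real.cos θ = a) ∧ ∃ b : ℚ, Real.sin θ = b} := by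
  have hs : Real.sqrt (1 + (q : ℝ) ^ 2) ^ 2 = 1 + (q : ℝ) ^ 2 :=
    Real.sq_sqrt (by positivity)
  have hpos : (0 : ℝ) < 1 + (q : ℝ) ^ 2 := by positivity
  have hsp : (0 : ℝ) < Real.sqrt (1 + (q : ℝ) ^ 2) := Real.sqrt_pos.mpr hpos
  constructor
  · refine ⟨(1 - q ^ 2) / (1 + q ^ 2), ?_⟩
    rw [Real.cos_two_mul, Real.cos_arctan]
    push_cast
    field_simp
    nlinarith [hs]
  · refine ⟨2 * q / (1 + q ^ 2), ?_⟩
    rw [Real.sin_two_mul, Real.sin_arctan, Real.cos_arctan]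
    push_cast
    field_simp
    rw [hs]

theorem stmt_4 :
    Dense {θ : ℝ | (∃ a : ℚ, Real.cos θ = a) ∧ ∃ b : ℚ, Real.sin θ = b} := by
  set S : Set ℝ := {θ : ℝ | (∃ a : ℚ, Real.cos θ = a) ∧ ∃ b : ℚ, Real.sin θ = b} with hS
  -- Step 1: Ioo (-π) π ⊆ closure S
  have h1 : Ioo (-π) π ⊆ closure S := by
    intro z hz
    have hz1 : -(π / 2) < z / 2 := by linarith [hz.1]
    have hz2 : z / 2 < π / 2 := by linarith [hz.2]
    have hzz : 2 * Real.arctan (Real.tan (z / 2)) = z := by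
      rw [Real.arctan_tan hz1 hz2]; ring
    have hcl : Real.tan (z / 2) ∈ closure (Set.range ((↑·) : ℚ → ℝ)) := by
      rw [Rat.denseRange_cast.closure_range]; trivial
    have := mem_closure_image
      (f := fun t : ℝ => 2 * Real.arctan t) (x := Real.tan (z / 2))
      ((continuous_const.mul Real.continuous_arctan).continuousAt) hcl
    rw [hzz] at this
    refine closure_mono ?_ this
    rintro θ ⟨_, ⟨q, rfl⟩, rfl⟩
    exact mem_ratCircle q
  -- Step 2: Icc (-π) π ⊆ closure S
  have h2 : Icc (-π) π ⊆ closure S := by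
    have : Icc (-π) π = closure (Ioo (-π) π) := by
      rw [closure_Ioo (by linarith [Real.pi_pos] : -π ≠ π)]
    rw [this]
    calc closure (Ioo (-π) π) ⊆ closure (closure S) := closure_mono h1
      _ = closure S := closure_closure
  -- Step 3: periodicity
  intro x
  have hp : (0 : ℝ) < 2 * π := by positivity
  set z := toIcoMod hp (-π) x with hzdef
  have hzmem : z ∈ Ico (-π) π := by
    have h := toIcoMod_mem_Ico hp (-π) x
    rwa [show -π + 2 * π = π by ring] at h
  have hzx : x = z + (toIcoDiv hp (-π) x : ℤ) * (2 * π) := by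
    have := self_sub_toIcoMod hp (-π) x
    rw [zsmul_eq_mul] at this
    linarith [this]
  have hzcl : z ∈ closure S := h2 ⟨hzmem.1, le_of_lt hzmem.2⟩
  set k : ℤ := toIcoDiv hp (-π) x with hk
  have := mem_closure_image (f := fun y : ℝ => y + (k : ℝ) * (2 * π)) (x := z)
    (by fun_prop) hzcl
  have himg : (fun y : ℝ => y + (k : ℝ) * (2 * π)) '' S ⊆ S := by
    rintro θ ⟨y, ⟨⟨a, ha⟩, ⟨b, hb⟩⟩, rfl⟩
    exact ⟨⟨a, by rw [Real.cos_add_int_mul_two_pi]; exact ha⟩,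
      ⟨b, by rw [Real.sin_add_int_mul_two_pi]; exact hb⟩⟩
  have : z + (k : ℝ) * (2 * π) ∈ closure S := closure_mono himg this
  rwa [hzx]
end

section
/- Every triangle in the plane can be approximated arbitrarily well by a triangle with rational side lengths and rational area: for any three non-collinear points A, B, C and any ε > 0 there exist points B', C' with |B − B'| < ε, |C − C'| < ε such that the triangle AB'C' has all three sides rational and rational area. -/
set_option maxHeartbeats 1000000

lemma key_rat (a : ℝ) (y : ℚ) (hy : (y:ℝ) ≠ 0) (δ : ℝ) (hδ : 0 < δ) :
    ∃ x r : ℚ, |(x:ℝ) - a| < δ ∧ Real.sqrt ((x:ℝ)^2 + (y:ℝ)^2) = r := by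
  set s := Real.sqrt (a^2 + (y:ℝ)^2) with hs_def
  have hsum : (0:ℝ) ≤ a^2 + (y:ℝ)^2 := by positivity
  have hs2 : s^2 = a^2 + (y:ℝ)^2 := Real.sq_sqrt hsum
  have hy2 : (0:ℝ) < (y:ℝ)^2 := by positivity
  have hs_gt : |a| < s := by
    have h1 : Real.sqrt (a^2) < Real.sqrt (a^2 + (y:ℝ)^2) :=
      Real.sqrt_lt_sqrt (by positivity) (by linarith)
    rwa [Real.sqrt_sq_eq_abs] at h1
  have hk : 0 < a + s := by
    have := neg_abs_le a; linarith
  set k₀ : ℝ := a + s with hk0_def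
  have hg : ContinuousAt (fun k : ℝ => (k^2 - (y:ℝ)^2)/(2*k)) k₀ := by
    apply ContinuousAt.div
    · fun_prop
    · fun_prop
    · positivity
  have hgk0 : (k₀^2 - (y:ℝ)^2)/(2*k₀) = a := by
    field_simp
    linear_combination hs2
  rw [Metric.continuousAt_iff] at hg
  obtain ⟨δ', hδ', hcont⟩ := hg δ hδ
  obtain ⟨k, hk1, hk2⟩ := exists_rat_btwn (show k₀ < k₀ + min δ' k₀ by
    have := lt_min hδ' hk; linarith)
  have hkpos : (0:ℝ) < (k:ℝ) := lt_trans hk hk1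
  have hkQpos : (0:ℚ) < k := by exact_mod_cast hkpos
  have hkne : (k:ℚ) ≠ 0 := ne_of_gt hkQpos
  refine ⟨(k^2 - y^2)/(2*k), (k^2 + y^2)/(2*k), ?_, ?_⟩
  · have hdist : dist (k:ℝ) k₀ < δ' := by
      rw [Real.dist_eq, abs_of_pos (by linarith)]
      have : (k:ℝ) < k₀ + δ' := lt_of_lt_of_le hk2 (by have := min_le_left δ' k₀; linarith)
      linarith
    have := hcont hdist
    rw [Real.dist_eq, hgk0] at this
    convert this using 2
    push_cast [hkne]
    ring
  · have hx : ((((k^2 - y^2)/(2*k) : ℚ)):ℝ)^2 + (y:ℝ)^2 = ((((k^2 + y^2)/(2*k) : ℚ)):ℝ)^2 := by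
      push_cast
      field_simp
      ring
    rw [hx, Real.sqrt_sq]
    push_cast
    positivity


lemma cross_ne (A B C : EuclideanSpace ℝ (Fin 2))
    (h : ¬ Collinear ℝ ({A, B, C} : Set (EuclideanSpace ℝ (Fin 2)))) :
    (B 0 - A 0) * (C 1 - A 1) - (B 1 - A 1) * (C 0 - A 0) ≠ 0 := by
  intro hc
  apply h
  rw [collinear_iff_of_mem (Set.mem_insert A _)]
  by_cases hB : B = A
  · refine ⟨C - A, fun p hp => ?_⟩
    simp only [Set.mem_insert_iff, Set.mem_singleton_iff] at hp
    rcases hp with rfl | rfl | rfl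
    · exact ⟨0, by simp⟩
    · exact ⟨0, by simp [hB]⟩
    · exact ⟨1, by simp⟩
  · refine ⟨B - A, fun p hp => ?_⟩
    simp only [Set.mem_insert_iff, Set.mem_singleton_iff] at hp
    have hne : B 0 - A 0 ≠ 0 ∨ B 1 - A 1 ≠ 0 := by
      by_contra hcon
      push_neg at hcon
      apply hB
      ext i
      fin_cases i
      · show B 0 = A 0; linarith [hcon.1]
      · show B 1 = A 1; linarith [hcon.2]
    rcases hp with rfl | rfl | rfl
    · exact ⟨0, by simp⟩
    · exact ⟨1, by simp⟩
    · rcases hne with h0 | h1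
      · refine ⟨(p 0 - A 0)/(B 0 - A 0), ?_⟩
        ext i
        fin_cases i
        · show p 0 = ((p 0 - A 0)/(B 0 - A 0)) • (B - A) 0 + A 0
          rw [PiLp.sub_apply, smul_eq_mul]
          field_simp
          ring
        · show p 1 = ((p 0 - A 0)/(B 0 - A 0)) • (B - A) 1 + A 1
          rw [PiLp.sub_apply, smul_eq_mul]
          field_simp
          linear_combination hc
      · refine ⟨(p 1 - A 1)/(B 1 - A 1), ?_⟩
        ext i
        fin_cases i
        · show p 0 = ((p 1 - A 1)/(B 1 - A 1)) • (B - A) 0 + A 0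
          rw [PiLp.sub_apply, smul_eq_mul]
          field_simp
          linear_combination -hc
        · show p 1 = ((p 1 - A 1)/(B 1 - A 1)) • (B - A) 1 + A 1
          rw [PiLp.sub_apply, smul_eq_mul]
          field_simp
          ring

theorem stmt_8 (A B C : EuclideanSpace ℝ (Fin 2))
    (h : ¬ Collinear ℝ ({A, B, C} : Set (EuclideanSpace ℝ (Fin 2))))
    (ε : ℝ) (hε : 0 < ε) :
    ∃ B' C' : EuclideanSpace ℝ (Fin 2),
      dist B B' < ε ∧ dist C C' < ε ∧
      (∃ q : ℚ, dist A B' = q) ∧ (∃ q : ℚ, dist A C' = q) ∧ (∃ q : ℚ, dist B' C' = q) ∧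
      ∃ q : ℚ, |(B' 0 - A 0) * (C' 1 - A 1) - (B' 1 - A 1) * (C' 0 - A 0)| / 2 = q := by
  have hcross := cross_ne A B C h
  obtain ⟨c, s, y0, hcs, hy0u, hy0v, hy0ne⟩ :
      ∃ c s y0 : ℝ, c^2 + s^2 = 1 ∧
        -s*(B 0 - A 0) + c*(B 1 - A 1) = y0 ∧
        -s*(C 0 - A 0) + c*(C 1 - A 1) = y0 ∧ y0 ≠ 0 := by
    have hw0 : (0:ℝ) ≤ (C 0 - B 0)^2 + (C 1 - B 1)^2 := by positivity
    have hw : 0 < (C 0 - B 0)^2 + (C 1 - B 1)^2 := by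
      rcases hw0.lt_or_eq with h' | h'
      · exact h'
      · exfalso
        have h0 : C 0 - B 0 = 0 := by nlinarith [sq_nonneg (C 0 - B 0), sq_nonneg (C 1 - B 1)]
        have h1 : C 1 - B 1 = 0 := by nlinarith [sq_nonneg (C 0 - B 0), sq_nonneg (C 1 - B 1)]
        exact hcross (by linear_combination (B 0 - A 0) * h1 - (B 1 - A 1) * h0)
    set L := Real.sqrt ((C 0 - B 0)^2 + (C 1 - B 1)^2) with hLdef
    have hL : 0 < L := Real.sqrt_pos.mpr hw
    have hL2 : L^2 = (C 0 - B 0)^2 + (C 1 - B 1)^2 := Real.sq_sqrt hw.le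
    refine ⟨(C 0 - B 0)/L, (C 1 - B 1)/L,
      -((C 1 - B 1)/L)*(B 0 - A 0) + ((C 0 - B 0)/L)*(B 1 - A 1), ?_, rfl, ?_, ?_⟩
    · field_simp
      linarith [hL2]
    · field_simp
      ring
    · intro h0
      apply hcross
      field_simp at h0
      linear_combination -h0
  have hy0u' := hy0u
  have hm : 0 < min (ε/2) |y0| := lt_min (by linarith) (abs_pos.mpr hy0ne)
  obtain ⟨yr, hyr1, hyr2⟩ := exists_rat_btwn (show y0 - min (ε/2) |y0| < y0 by linarith)
  have hyrnear : |(yr:ℝ) - y0| < min (ε/2) |y0| := by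
    rw [abs_lt]; exact ⟨by linarith, by linarith⟩
  have hyrne : (yr:ℝ) ≠ 0 := by
    intro h0
    rw [h0] at hyrnear
    have h2 := min_le_right (ε/2) |y0|
    rw [zero_sub, abs_neg] at hyrnear
    linarith
  have hyrE : |(yr:ℝ) - y0| < ε/2 := lt_of_lt_of_le hyrnear (min_le_left _ _)
  obtain ⟨x1, r1, hx1, hr1⟩ := key_rat (c*(B 0 - A 0) + s*(B 1 - A 1)) yr hyrne (ε/2) (by linarith)
  obtain ⟨x2, r2, hx2, hr2⟩ := key_rat (c*(C 0 - A 0) + s*(C 1 - A 1)) yr hyrne (ε/2) (by linarith)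
  have hyB : |(yr:ℝ) - (-s*(B 0 - A 0) + c*(B 1 - A 1))| < ε/2 := by rw [hy0u]; exact hyrE
  have hyC : |(yr:ℝ) - (-s*(C 0 - A 0) + c*(C 1 - A 1))| < ε/2 := by rw [hy0v]; exact hyrE
  refine ⟨(WithLp.equiv 2 (Fin 2 → ℝ)).symm ![A 0 + (c*x1 - s*yr), A 1 + (s*x1 + c*yr)],
          (WithLp.equiv 2 (Fin 2 → ℝ)).symm ![A 0 + (c*x2 - s*yr), A 1 + (s*x2 + c*yr)],
          ?_, ?_, ⟨r1, ?_⟩, ⟨r2, ?_⟩, ⟨|x1 - x2|, ?_⟩, ⟨|x1 - x2| * |yr| / 2, ?_⟩⟩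
  · rw [EuclideanSpace.dist_eq]
    simp only [WithLp.equiv_symm_apply, PiLp.toLp_apply, Fin.sum_univ_two, Matrix.cons_val_zero,
      Matrix.cons_val_one, Matrix.head_cons, Real.dist_eq, sq_abs]
    rw [Real.sqrt_lt' hε]
    have e1 : (B 0 - (A 0 + (c*x1 - s*yr)))^2 + (B 1 - (A 1 + (s*x1 + c*yr)))^2
        = ((c*(B 0 - A 0) + s*(B 1 - A 1)) - x1)^2
          + ((-s*(B 0 - A 0) + c*(B 1 - A 1)) - yr)^2 := by
      linear_combination ((x1:ℝ)^2 + (yr:ℝ)^2 - (B 0 - A 0)^2 - (B 1 - A 1)^2) * hcs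
    rw [e1]
    obtain ⟨hl, hr⟩ := abs_lt.mp hx1
    obtain ⟨hl', hr'⟩ := abs_lt.mp hyB
    nlinarith
  · rw [EuclideanSpace.dist_eq]
    simp only [WithLp.equiv_symm_apply, PiLp.toLp_apply, Fin.sum_univ_two, Matrix.cons_val_zero,
      Matrix.cons_val_one, Matrix.head_cons, Real.dist_eq, sq_abs]
    rw [Real.sqrt_lt' hε]
    have e2 : (C 0 - (A 0 + (c*x2 - s*yr)))^2 + (C 1 - (A 1 + (s*x2 + c*yr)))^2
        = ((c*(C 0 - A 0) + s*(C 1 - A 1)) - x2)^2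
          + ((-s*(C 0 - A 0) + c*(C 1 - A 1)) - yr)^2 := by
      linear_combination ((x2:ℝ)^2 + (yr:ℝ)^2 - (C 0 - A 0)^2 - (C 1 - A 1)^2) * hcs
    rw [e2]
    obtain ⟨hl, hr⟩ := abs_lt.mp hx2
    obtain ⟨hl', hr'⟩ := abs_lt.mp hyC
    nlinarith
  · rw [EuclideanSpace.dist_eq]
    simp only [WithLp.equiv_symm_apply, PiLp.toLp_apply, Fin.sum_univ_two, Matrix.cons_val_zero,
      Matrix.cons_val_one, Matrix.head_cons, Real.dist_eq, sq_abs]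
    have e3 : (A 0 - (A 0 + (c*x1 - s*yr)))^2 + (A 1 - (A 1 + (s*x1 + c*yr)))^2
        = (x1:ℝ)^2 + (yr:ℝ)^2 := by
      linear_combination ((x1:ℝ)^2 + (yr:ℝ)^2) * hcs
    rw [e3, hr1]
  · rw [EuclideanSpace.dist_eq]
    simp only [WithLp.equiv_symm_apply, PiLp.toLp_apply, Fin.sum_univ_two, Matrix.cons_val_zero,
      Matrix.cons_val_one, Matrix.head_cons, Real.dist_eq, sq_abs]
    have e4 : (A 0 - (A 0 + (c*x2 - s*yr)))^2 + (A 1 - (A 1 + (s*x2 + c*yr)))^2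
        = (x2:ℝ)^2 + (yr:ℝ)^2 := by
      linear_combination ((x2:ℝ)^2 + (yr:ℝ)^2) * hcs
    rw [e4, hr2]
  · rw [EuclideanSpace.dist_eq]
    simp only [WithLp.equiv_symm_apply, PiLp.toLp_apply, Fin.sum_univ_two, Matrix.cons_val_zero,
      Matrix.cons_val_one, Matrix.head_cons, Real.dist_eq, sq_abs]
    have e5 : ((A 0 + (c*x1 - s*yr)) - (A 0 + (c*x2 - s*yr)))^2
        + ((A 1 + (s*x1 + c*yr)) - (A 1 + (s*x2 + c*yr)))^2 = ((x1:ℝ) - (x2:ℝ))^2 := by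
      linear_combination (((x1:ℝ) - (x2:ℝ))^2) * hcs
    rw [e5, Real.sqrt_sq_eq_abs]
    push_cast
    ring
  · simp only [WithLp.equiv_symm_apply, PiLp.toLp_apply, Matrix.cons_val_zero, Matrix.cons_val_one,
      Matrix.head_cons]
    have e6 : (A 0 + (c*x1 - s*yr) - A 0) * (A 1 + (s*x2 + c*yr) - A 1)
        - (A 1 + (s*x1 + c*yr) - A 1) * (A 0 + (c*x2 - s*yr) - A 0)
        = ((x1:ℝ) - (x2:ℝ)) * (yr:ℝ) := by
      linear_combination (((x1:ℝ) - (x2:ℝ)) * (yr:ℝ)) * hcs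
    rw [e6]
    push_cast
    rw [abs_mul]
end

section
/- Let P = (0,0), Q = (r,0) with r rational, and L the line y = tan(θ)·x with cos θ rational, 0 < θ < π/2. Then the set of points R on L with both d(P,R) and d(Q,R) rational is dense in L. -/
/-- Points of the line `L` through the origin `P = (0,0)` making angle `θ` with the
`x`-axis are parametrized by arclength as `R t = (t cos θ, t sin θ)`, so that
`d(P, R t) = |t|` and `d(Q, R t) = √((t cos θ - r)² + (t sin θ)²)` where `Q = (r, 0)`.
Density of the set of such points in `L` is density of the parameter set in `ℝ`. -/
theorem stmt_10 (r : ℝ) (hrQ : ∃ q : ℚ, r = q) (hr : 0 < r)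
    (θ : ℝ) (hθ0 : 0 < θ) (hθ1 : θ < Real.pi / 2) (hcos : ∃ q : ℚ, Real.cos θ = q) :
    Dense {t : ℝ |
      (∃ q : ℚ, Real.sqrt ((t * Real.cos θ - 0) ^ 2 + (t * Real.sin θ - 0) ^ 2) = q) ∧
      ∃ q : ℚ, Real.sqrt ((t * Real.cos θ - r) ^ 2 + (t * Real.sin θ - 0) ^ 2) = q} := by
  obtain ⟨rq, hrq⟩ := hrQ
  obtain ⟨cq, hcq⟩ := hcos
  set c : ℝ := Real.cos θ with hc
  set sn : ℝ := Real.sin θ with hsn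
  have hc2 : c ^ 2 + sn ^ 2 = 1 := by
    rw [hc, hsn]; exact Real.cos_sq_add_sin_sq θ
  have hsnpos : 0 < sn := Real.sin_pos_of_pos_of_lt_pi hθ0
    (lt_trans hθ1 (by linarith [Real.pi_pos]))
  set k : ℝ := r ^ 2 * sn ^ 2 with hk
  have hkpos : 0 < k := by positivity
  set kq : ℚ := rq ^ 2 * (1 - cq ^ 2) with hkq
  have hkqk : (kq : ℝ) = k := by
    rw [hkq]; push_cast
    rw [← hrq, ← hcq, hk]
    linear_combination -r ^ 2 * hc2
  -- membership lemma
  have hmem : ∀ q : ℚ, 0 < (q : ℝ) →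
      (r * c + ((q : ℝ) - k / q) / 2) ∈ {t : ℝ |
      (∃ q : ℚ, Real.sqrt ((t * c - 0) ^ 2 + (t * sn - 0) ^ 2) = q) ∧
      ∃ q : ℚ, Real.sqrt ((t * c - r) ^ 2 + (t * sn - 0) ^ 2) = q} := by
    intro q hq
    have hq0 : (q : ℝ) ≠ 0 := ne_of_gt hq
    set t : ℝ := r * c + ((q : ℝ) - k / q) / 2 with ht
    constructor
    · refine ⟨|rq * cq + (q - kq / q) / 2|, ?_⟩
      have h1 : (t * c - 0) ^ 2 + (t * sn - 0) ^ 2 = t ^ 2 := by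
        linear_combination t ^ 2 * hc2
      rw [h1, Real.sqrt_sq_eq_abs]
      have : t = ((rq * cq + (q - kq / q) / 2 : ℚ) : ℝ) := by
        push_cast
        rw [← hrq, ← hcq, hkqk]
      rw [this, ← Rat.cast_abs]
    · refine ⟨(q + kq / q) / 2, ?_⟩
      have h1 : (t * c - r) ^ 2 + (t * sn - 0) ^ 2 = ((q + k / q) / 2) ^ 2 := by
        have h2 : (t * c - r) ^ 2 + (t * sn - 0) ^ 2 = (t - r * c) ^ 2 + k := by
          rw [hk]; linear_combination (t ^ 2 - r ^ 2) * hc2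
        rw [h2, ht]
        field_simp
        ring
      rw [h1, Real.sqrt_sq (by positivity)]
      push_cast
      rw [hkqk]
  rw [Metric.dense_iff]
  intro x ε hε
  set s0 : ℝ := x - r * c with hs0
  have hsqnn : (0:ℝ) ≤ s0 ^ 2 + k := by positivity
  set u0 : ℝ := s0 + Real.sqrt (s0 ^ 2 + k) with hu0def
  have hsq : (Real.sqrt (s0 ^ 2 + k)) ^ 2 = s0 ^ 2 + k := Real.sq_sqrt hsqnn
  have hgt : |s0| < Real.sqrt (s0 ^ 2 + k) := by
    have := Real.sqrt_lt_sqrt (sq_nonneg s0) (by linarith : s0 ^ 2 < s0 ^ 2 + k)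
    rwa [Real.sqrt_sq_eq_abs] at this
  have hu0 : 0 < u0 := by
    have := neg_abs_le s0
    rw [hu0def]; linarith
  have hu0ne : u0 ≠ 0 := ne_of_gt hu0
  set f : ℝ → ℝ := fun u => r * c + (u - k / u) / 2 with hf
  have hfx : f u0 = x := by
    have h2 : u0 - k / u0 = 2 * s0 := by
      field_simp
      linear_combination hsq
    rw [hf]
    simp only
    rw [h2, hs0]
    ring
  have hcont : ContinuousAt f u0 :=
    (continuousAt_const.add (((continuousAt_id.sub
      (continuousAt_const.div continuousAt_id hu0ne)).div_const 2)))
  rw [Metric.continuousAt_iff] at hcont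
  obtain ⟨δ, hδ, hδ2⟩ := hcont ε hε
  obtain ⟨q, hq1, hq2⟩ := exists_rat_btwn (show max (u0 - δ) 0 < u0 by
    rw [max_lt_iff]; exact ⟨by linarith, hu0⟩)
  have hqpos : (0:ℝ) < q := lt_of_le_of_lt (le_max_right _ _) hq1
  have hqdist : dist (q : ℝ) u0 < δ := by
    rw [Real.dist_eq, abs_sub_lt_iff]
    constructor
    · linarith
    · have : u0 - δ < q := lt_of_le_of_lt (le_max_left _ _) hq1
      linarith
  refine ⟨f q, ?_, ?_⟩
  · rw [Metric.mem_ball]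
    calc dist (f q) x = dist (f q) (f u0) := by rw [hfx]
    _ < ε := hδ2 hqdist
  · exact hmem q hqpos
end
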